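/- Robustness of the controllable-mirror SQKD protocol (algebraic core). Let E be a complex vector space and let (E_{m,n})_{m,n ≥ 0} be a finitely supported family in E with E_{m,n} = 0 whenever m > 0 and n > 0 (i.e., Alice's SWAP-ALL measurement never yields result 11). Set φ₁₀ = Σ_{m ≥ 1} x^m ⊗ E_{m,0}, φ₀₁ = Σ_{n ≥ 1} y^n ⊗ E_{0,n}, and φ₀₀ = 1 ⊗ E_{0,0} in ℂ[x,y] ⊗ E. Let V : ℂ[x,y] ⊗ E → ℂ[x,y] ⊗ E be a ℂ-linear map satisfying: (a) V φ₀₀ = 1 ⊗ H₀₀ for some H₀₀ ∈ E; (b) every E-coefficient of V φ₁₀ on a monomial x^j y^k with k ≥ 1 is zero (Bob never detects a photon in the |0⟩ mode on SWAP-01 rounds with Alice's sum 0); (c) every E-coefficient of V φ₀₁ on a monomial x^j y^k with j ≥ 1 is zero (Bob never detects a photon in the |1⟩ mode on SWAP-10 rounds with Alice's sum 0); (d) V(φ₁₀ + φ₀₁ + φ₀₀) has zero probability of a photon in the |−⟩ mode (Bob never gets measurement result 10 or 11 in the Hadamard basis on CTRL rounds). Then there exist vectors F, F₀, G₀ ∈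 E such that V φ₁₀ = x ⊗ F + 1 ⊗ F₀ and V φ₀₁ = y ⊗ F + 1 ⊗ G₀. Consequently V(φ₀₁ + φ₀₀) = y ⊗ F + 1 ⊗ (G₀ + H₀₀) and V(φ₁₀ + φ₀₀) = x ⊗ F + 1 ⊗ (F₀ + H₀₀): the auxiliary (Eve) vector attached to the single-photon component is the same vector F in both cases, so the state of Eve's probe is independent of which SWAP operation (SWAP-10 or SWAP-01) Alice performed whenever Alice and Bob share a bit. -/

import Mathlib

open MvPolynomial TensorProduct

/-- The `E`-coefficient of the monomial `X 0 ^ j * X 1 ^ k` of an element of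
`ℂ[X 0, X 1] ⊗[ℂ] E` (with `x = X 0` the `|1⟩` mode and `y = X 1` the `|0⟩` mode). -/
noncomputable def Ecoeff (E : Type*) [AddCommGroup E] [Module ℂ E] (j k : ℕ) :
    MvPolynomial (Fin 2) ℂ ⊗[ℂ] E →ₗ[ℂ] E :=
  TensorProduct.lift
    ((LinearMap.lsmul ℂ E).comp
      (MvPolynomial.lcoeff ℂ (Finsupp.single 0 j + Finsupp.single 1 k)))

/-- The Hadamard mode change: the `ℂ`-algebra substitution `x ↦ (u − v)/√2`,
`y ↦ (u + v)/√2`, where `x = X 0`, `y = X 1` in the source and `u = X 0`,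
`v = X 1` in the target. -/
noncomputable def hadamard : MvPolynomial (Fin 2) ℂ →ₐ[ℂ] MvPolynomial (Fin 2) ℂ :=
  MvPolynomial.aeval
    ![((Real.sqrt 2 : ℂ))⁻¹ • ((X 0 : MvPolynomial (Fin 2) ℂ) - X 1),
      ((Real.sqrt 2 : ℂ))⁻¹ • ((X 0 : MvPolynomial (Fin 2) ℂ) + X 1)]

/-- `ψ` has zero probability of a photon in the `|−⟩` mode: for every `(j,k)`
with `k ≥ 1`, the `E`-coefficient of `u^j v^k` in `(h ⊗ id) ψ` is zero. -/
def NoMinusPhoton {E : Type*} [AddCommGroup E] [Module ℂ E]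
    (ψ : MvPolynomial (Fin 2) ℂ ⊗[ℂ] E) : Prop :=
  ∀ j k : ℕ, 1 ≤ k → Ecoeff E j k (LinearMap.rTensor E hadamard.toLinearMap ψ) = 0

/-! ### Auxiliary lemmas -/

section Aux

variable {E : Type*} [AddCommGroup E] [Module ℂ E]

noncomputable def MvPolynomial.scalarRTensor :
    MvPolynomial (Fin 2) ℂ ⊗[ℂ] E ≃ₗ[ℂ] (Fin 2 →₀ ℕ) →₀ E :=
  (LinearEquiv.rTensor E (AddMonoidAlgebra.coeffLinearEquiv ℂ :
      MvPolynomial (Fin 2) ℂ ≃ₗ[ℂ] (Fin 2 →₀ ℕ) →₀ ℂ)).trans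
    (TensorProduct.finsuppScalarLeft ℂ E (Fin 2 →₀ ℕ))

lemma scalarRTensor_apply_tmul_apply (p : MvPolynomial (Fin 2) ℂ) (n : E) (d : Fin 2 →₀ ℕ) :
    MvPolynomial.scalarRTensor (p ⊗ₜ[ℂ] n) d = MvPolynomial.coeff d p • n := by
  simp only [MvPolynomial.scalarRTensor, LinearEquiv.trans_apply, LinearEquiv.rTensor_tmul]
  rw [TensorProduct.finsuppScalarLeft_apply_tmul_apply]
  rfl

lemma scalarRTensor_apply_monomial_tmul (e : Fin 2 →₀ ℕ) (r : ℂ) (n : E) (d : Fin 2 →₀ ℕ) :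
    MvPolynomial.scalarRTensor (MvPolynomial.monomial e r ⊗ₜ[ℂ] n) d
      = if e = d then r • n else 0 := by
  rw [scalarRTensor_apply_tmul_apply, MvPolynomial.coeff_monomial, ite_smul, zero_smul]

lemma Ecoeff_tmul (j k : ℕ) (p : MvPolynomial (Fin 2) ℂ) (c : E) :
    Ecoeff E j k (p ⊗ₜ[ℂ] c)
      = MvPolynomial.coeff (Finsupp.single 0 j + Finsupp.single 1 k) p • c := by
  simp [Ecoeff]

lemma fin2_decomp (d : Fin 2 →₀ ℕ) :
    d = Finsupp.single 0 (d 0) + Finsupp.single 1 (d 1) := by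
  ext i
  fin_cases i <;> simp [Finsupp.single_apply]

lemma pair_eq_iff (a b c d : ℕ) :
    (Finsupp.single (0 : Fin 2) a + Finsupp.single 1 b
      = Finsupp.single 0 c + Finsupp.single 1 d) ↔ a = c ∧ b = d := by
  constructor
  · intro h
    constructor
    · have := DFunLike.congr_fun h 0; simpa [Finsupp.single_apply] using this
    · have := DFunLike.congr_fun h 1; simpa [Finsupp.single_apply] using this
  · rintro ⟨rfl, rfl⟩; rfl

lemma Ecoeff_eq (j k : ℕ) (ψ : MvPolynomial (Fin 2) ℂ ⊗[ℂ] E) :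
    Ecoeff E j k ψ
      = MvPolynomial.scalarRTensor ψ (Finsupp.single 0 j + Finsupp.single 1 k) := by
  induction ψ using TensorProduct.induction_on with
  | zero => simp
  | tmul p c => rw [Ecoeff_tmul, scalarRTensor_apply_tmul_apply]
  | add x y hx hy => simp [map_add, hx, hy, Finsupp.add_apply]

lemma Ecoeff_ext {ψ ψ' : MvPolynomial (Fin 2) ℂ ⊗[ℂ] E}
    (h : ∀ j k : ℕ, Ecoeff E j k ψ = Ecoeff E j k ψ') : ψ = ψ' := by
  apply MvPolynomial.scalarRTensor.injective
  ext d
  rw [fin2_decomp d]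
  rw [← Ecoeff_eq, ← Ecoeff_eq, h]

lemma scalarRTensor_monomial_tmul (m : Fin 2 →₀ ℕ) (c : E) :
    MvPolynomial.scalarRTensor ((MvPolynomial.monomial m (1:ℂ)) ⊗ₜ[ℂ] c)
      = Finsupp.single m c := by
  ext d
  rw [scalarRTensor_apply_monomial_tmul]
  simp [Finsupp.single_apply]

lemma psi_expand' (ψ : MvPolynomial (Fin 2) ℂ ⊗[ℂ] E) :
    ψ = ∑ m ∈ (MvPolynomial.scalarRTensor ψ).support,
      (MvPolynomial.monomial m (1:ℂ)) ⊗ₜ[ℂ] (MvPolynomial.scalarRTensor ψ m) := by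
  apply MvPolynomial.scalarRTensor.injective
  rw [map_sum]
  simp_rw [scalarRTensor_monomial_tmul]
  exact (Finsupp.sum_single _).symm

lemma coeff_pow_eps (ε : ℂ) (j d k : ℕ) :
    MvPolynomial.coeff (Finsupp.single 0 d + Finsupp.single 1 k)
      ((X 0 + ε • X 1 : MvPolynomial (Fin 2) ℂ) ^ j)
    = if d + k = j then ε ^ k * (j.choose k : ℂ) else 0 := by
  rw [add_pow]
  rw [MvPolynomial.coeff_sum]
  have hterm : ∀ i ∈ Finset.range (j+1),
      MvPolynomial.coeff (Finsupp.single 0 d + Finsupp.single 1 k)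
        ((X 0 : MvPolynomial (Fin 2) ℂ) ^ i * (ε • X 1) ^ (j - i)
          * (j.choose i : MvPolynomial (Fin 2) ℂ))
      = if i = d ∧ j - i = k then ε ^ (j-i) * (j.choose i : ℂ) else 0 := by
    intro i _
    rw [smul_pow, mul_smul_comm, smul_mul_assoc, MvPolynomial.coeff_smul]
    rw [X_pow_eq_monomial, X_pow_eq_monomial]
    rw [show ((j.choose i : MvPolynomial (Fin 2) ℂ)) = MvPolynomial.C (j.choose i : ℂ) from
      (map_natCast MvPolynomial.C _).symm]
    rw [MvPolynomial.monomial_mul]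
    rw [mul_comm, MvPolynomial.coeff_C_mul, MvPolynomial.coeff_monomial]
    simp only [pair_eq_iff]
    by_cases h : i = d ∧ j - i = k <;> simp [h, mul_comm]
  rw [Finset.sum_congr rfl hterm]
  by_cases hdj : d + k = j
  · subst hdj
    rw [Finset.sum_eq_single d]
    · have h1 : d = d ∧ d + k - d = k := ⟨rfl, by omega⟩
      rw [if_pos h1, if_pos rfl]
      have h2 : d + k - d = k := by omega
      rw [h2, Nat.choose_symm_add]
    · intro b _ hb
      have : ¬ (b = d ∧ d + k - b = k) := by rintro ⟨rfl, -⟩; exact hb rfl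
      simp [this]
    · intro hd
      exfalso; apply hd; simp [Finset.mem_range]
  · rw [if_neg hdj]
    apply Finset.sum_eq_zero
    intro i hi
    simp only [Finset.mem_range] at hi
    have : ¬ (i = d ∧ j - i = k) := by rintro ⟨rfl, rfl⟩; omega
    simp [this]

noncomputable def rr : ℂ := ((Real.sqrt 2 : ℂ))⁻¹

lemma rr_ne : rr ≠ 0 := by
  simp only [rr, ne_eq, inv_eq_zero]
  norm_cast
  positivity

lemma hadamard_X0 :
    hadamard (X 0) = rr • ((X 0 : MvPolynomial (Fin 2) ℂ) + (-1 : ℂ) • X 1) := by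
  simp [hadamard, rr, sub_eq_add_neg, neg_smul, one_smul]

lemma hadamard_X1 :
    hadamard (X 1) = rr • ((X 0 : MvPolynomial (Fin 2) ℂ) + (1 : ℂ) • X 1) := by
  simp [hadamard, rr]

lemma hadamard_mono0 (j : ℕ) :
    hadamard (MvPolynomial.monomial (Finsupp.single 0 j) (1:ℂ))
      = rr ^ j • ((X 0 : MvPolynomial (Fin 2) ℂ) + (-1 : ℂ) • X 1) ^ j := by
  rw [← X_pow_eq_monomial, map_pow, hadamard_X0, smul_pow]

lemma hadamard_mono1 (n : ℕ) :
    hadamard (MvPolynomial.monomial (Finsupp.single 1 n) (1:ℂ))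
      = rr ^ n • ((X 0 : MvPolynomial (Fin 2) ℂ) + (1 : ℂ) • X 1) ^ n := by
  rw [← X_pow_eq_monomial, map_pow, hadamard_X1, smul_pow]

lemma key1 (ψ : MvPolynomial (Fin 2) ℂ ⊗[ℂ] E)
    (h0 : ∀ m : Fin 2 →₀ ℕ, m 1 ≠ 0 → MvPolynomial.scalarRTensor ψ m = 0) (d k : ℕ) :
    Ecoeff E d k (LinearMap.rTensor E hadamard.toLinearMap ψ)
      = (rr ^ (d+k) * ((-1:ℂ) ^ k * ((d+k).choose k : ℂ))) •
          MvPolynomial.scalarRTensor ψ (Finsupp.single 0 (d+k)) := by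
  conv_lhs => rw [psi_expand' ψ]
  rw [map_sum, map_sum]
  have hterm : ∀ m : Fin 2 →₀ ℕ,
      Ecoeff E d k (LinearMap.rTensor E hadamard.toLinearMap
        ((MvPolynomial.monomial m (1:ℂ)) ⊗ₜ[ℂ] MvPolynomial.scalarRTensor ψ m))
      = MvPolynomial.coeff (Finsupp.single 0 d + Finsupp.single 1 k)
          (hadamard (MvPolynomial.monomial m (1:ℂ))) • MvPolynomial.scalarRTensor ψ m := by
    intro m
    rw [LinearMap.rTensor_tmul, Ecoeff_tmul]
    rfl
  simp_rw [hterm]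
  rw [Finset.sum_eq_single (Finsupp.single (0 : Fin 2) (d+k))]
  · rw [hadamard_mono0, MvPolynomial.coeff_smul, coeff_pow_eps, if_pos rfl, smul_eq_mul]
  · intro m hm hne
    by_cases h1 : m 1 = 0
    · have hm0 : m = Finsupp.single 0 (m 0) := by
        rw [fin2_decomp m, h1]; simp
      have hne' : m 0 ≠ d + k := by
        intro h; apply hne; rw [hm0, h]
      rw [hm0, hadamard_mono0, MvPolynomial.coeff_smul, coeff_pow_eps,
        if_neg (fun h => hne' h.symm)]
      simp
    · rw [h0 m h1, smul_zero]
  · intro hns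
    rw [Finsupp.notMem_support_iff.mp hns, smul_zero]

lemma key2 (ψ : MvPolynomial (Fin 2) ℂ ⊗[ℂ] E)
    (h0 : ∀ m : Fin 2 →₀ ℕ, m 0 ≠ 0 → MvPolynomial.scalarRTensor ψ m = 0) (d k : ℕ) :
    Ecoeff E d k (LinearMap.rTensor E hadamard.toLinearMap ψ)
      = (rr ^ (d+k) * ((d+k).choose k : ℂ)) •
          MvPolynomial.scalarRTensor ψ (Finsupp.single 1 (d+k)) := by
  conv_lhs => rw [psi_expand' ψ]
  rw [map_sum, map_sum]
  have hterm : ∀ m : Fin 2 →₀ ℕ,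
      Ecoeff E d k (LinearMap.rTensor E hadamard.toLinearMap
        ((MvPolynomial.monomial m (1:ℂ)) ⊗ₜ[ℂ] MvPolynomial.scalarRTensor ψ m))
      = MvPolynomial.coeff (Finsupp.single 0 d + Finsupp.single 1 k)
          (hadamard (MvPolynomial.monomial m (1:ℂ))) • MvPolynomial.scalarRTensor ψ m := by
    intro m
    rw [LinearMap.rTensor_tmul, Ecoeff_tmul]
    rfl
  simp_rw [hterm]
  rw [Finset.sum_eq_single (Finsupp.single (1 : Fin 2) (d+k))]
  · rw [hadamard_mono1, MvPolynomial.coeff_smul, coeff_pow_eps, if_pos rfl, smul_eq_mul,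
      one_pow, one_mul]
  · intro m hm hne
    by_cases h1 : m 0 = 0
    · have hm0 : m = Finsupp.single 1 (m 1) := by
        rw [fin2_decomp m, h1]; simp
      have hne' : m 1 ≠ d + k := by
        intro h; apply hne; rw [hm0, h]
      rw [hm0, hadamard_mono1, MvPolynomial.coeff_smul, coeff_pow_eps,
        if_neg (fun h => hne' h.symm)]
      simp
    · rw [h0 m h1, smul_zero]
  · intro hns
    rw [Finsupp.notMem_support_iff.mp hns, smul_zero]

lemma key0 (c : E) (d k : ℕ) (hk : 1 ≤ k) :
    Ecoeff E d k (LinearMap.rTensor E hadamard.toLinearMap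
      ((1 : MvPolynomial (Fin 2) ℂ) ⊗ₜ[ℂ] c)) = 0 := by
  rw [LinearMap.rTensor_tmul]
  have h1 : hadamard.toLinearMap (1 : MvPolynomial (Fin 2) ℂ) = 1 := map_one hadamard
  rw [h1, Ecoeff_tmul]
  have hne : (Finsupp.single (0:Fin 2) d + Finsupp.single 1 k) ≠ 0 := by
    intro h
    have := DFunLike.congr_fun h 1
    simp [Finsupp.single_apply] at this
    omega
  rw [MvPolynomial.coeff_one, if_neg (fun h => hne h.symm), zero_smul]

lemma reconstruct0 (ψ : MvPolynomial (Fin 2) ℂ ⊗[ℂ] E)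
    (hbz : ∀ j k : ℕ, 1 ≤ k → Ecoeff E j k ψ = 0)
    (h2 : ∀ j : ℕ, 2 ≤ j → Ecoeff E j 0 ψ = 0) :
    ψ = (X 0 : MvPolynomial (Fin 2) ℂ) ⊗ₜ[ℂ] Ecoeff E 1 0 ψ
        + (1 : MvPolynomial (Fin 2) ℂ) ⊗ₜ[ℂ] Ecoeff E 0 0 ψ := by
  apply Ecoeff_ext
  intro j k
  rw [map_add, Ecoeff_tmul, Ecoeff_tmul, MvPolynomial.coeff_one, MvPolynomial.coeff_X']
  have hc1 : (Finsupp.single (0:Fin 2) 1 = Finsupp.single 0 j + Finsupp.single 1 k)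
      ↔ (1 = j ∧ 0 = k) := by
    constructor
    · intro h; exact (pair_eq_iff 1 0 j k).mp (by simpa using h)
    · rintro ⟨rfl, rfl⟩; simp
  have hc0 : ((0 : Fin 2 →₀ ℕ) = Finsupp.single 0 j + Finsupp.single 1 k)
      ↔ (0 = j ∧ 0 = k) := by
    constructor
    · intro h; exact (pair_eq_iff 0 0 j k).mp (by simpa using h)
    · rintro ⟨rfl, rfl⟩; simp
  by_cases h1 : (Finsupp.single (0:Fin 2) 1 = Finsupp.single 0 j + Finsupp.single 1 k)
  · obtain ⟨rfl, rfl⟩ := hc1.mp h1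
    have h0 : ¬ ((0 : Fin 2 →₀ ℕ) = Finsupp.single 0 1 + Finsupp.single 1 0) := by
      intro h; obtain ⟨e, -⟩ := hc0.mp h; omega
    rw [if_pos h1, if_neg h0]
    simp
  · by_cases h0 : ((0 : Fin 2 →₀ ℕ) = Finsupp.single 0 j + Finsupp.single 1 k)
    · obtain ⟨rfl, rfl⟩ := hc0.mp h0
      rw [if_neg h1, if_pos h0]
      simp
    · rw [if_neg h1, if_neg h0, zero_smul, zero_smul, add_zero]
      rcases Nat.eq_zero_or_pos k with rfl | hk
      · have hj : 2 ≤ j := by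
          rcases j with _ | _ | j
          · exact absurd (hc0.mpr ⟨rfl, rfl⟩) h0
          · exact absurd (hc1.mpr ⟨rfl, rfl⟩) h1
          · omega
        exact h2 j hj
      · exact hbz j k hk

lemma reconstruct1 (ψ : MvPolynomial (Fin 2) ℂ ⊗[ℂ] E)
    (hcz : ∀ j k : ℕ, 1 ≤ j → Ecoeff E j k ψ = 0)
    (h2 : ∀ k : ℕ, 2 ≤ k → Ecoeff E 0 k ψ = 0) :
    ψ = (X 1 : MvPolynomial (Fin 2) ℂ) ⊗ₜ[ℂ] Ecoeff E 0 1 ψ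
        + (1 : MvPolynomial (Fin 2) ℂ) ⊗ₜ[ℂ] Ecoeff E 0 0 ψ := by
  apply Ecoeff_ext
  intro j k
  rw [map_add, Ecoeff_tmul, Ecoeff_tmul, MvPolynomial.coeff_one, MvPolynomial.coeff_X']
  have hc1 : (Finsupp.single (1:Fin 2) 1 = Finsupp.single 0 j + Finsupp.single 1 k)
      ↔ (0 = j ∧ 1 = k) := by
    constructor
    · intro h; exact (pair_eq_iff 0 1 j k).mp (by simpa using h)
    · rintro ⟨rfl, rfl⟩; simp
  have hc0 : ((0 : Fin 2 →₀ ℕ) = Finsupp.single 0 j + Finsupp.single 1 k)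
      ↔ (0 = j ∧ 0 = k) := by
    constructor
    · intro h; exact (pair_eq_iff 0 0 j k).mp (by simpa using h)
    · rintro ⟨rfl, rfl⟩; simp
  by_cases h1 : (Finsupp.single (1:Fin 2) 1 = Finsupp.single 0 j + Finsupp.single 1 k)
  · obtain ⟨rfl, rfl⟩ := hc1.mp h1
    have h0 : ¬ ((0 : Fin 2 →₀ ℕ) = Finsupp.single 0 0 + Finsupp.single 1 1) := by
      intro h; obtain ⟨-, e⟩ := hc0.mp h; omega
    rw [if_pos h1, if_neg h0]
    simp
  · by_cases h0 : ((0 : Fin 2 →₀ ℕ) = Finsupp.single 0 j + Finsupp.single 1 k)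
    · obtain ⟨rfl, rfl⟩ := hc0.mp h0
      rw [if_neg h1, if_pos h0]
      simp
    · rw [if_neg h1, if_neg h0, zero_smul, zero_smul, add_zero]
      rcases Nat.eq_zero_or_pos j with rfl | hj
      · have hk : 2 ≤ k := by
          rcases k with _ | _ | k
          · exact absurd (hc0.mpr ⟨rfl, rfl⟩) h0
          · exact absurd (hc1.mpr ⟨rfl, rfl⟩) h1
          · omega
        exact h2 k hk
      · exact hcz j k hj

end Aux

/-- Robustness of the controllable-mirror SQKD protocol (algebraic core):
if Eve's second attack `V` causes no detectable errors (hypotheses (a)–(d)),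
then the Eve vector attached to the single-photon component of `V φ₁₀` and
`V φ₀₁` is the same vector `F`, so Eve's probe is independent of which SWAP
operation Alice performed whenever Alice and Bob share a bit. -/
theorem stmt5 {E : Type*} [AddCommGroup E] [Module ℂ E]
    (Efam : ℕ → ℕ → E) (hfin : (Function.support (Function.uncurry Efam)).Finite)
    (hE11 : ∀ m n : ℕ, 0 < m → 0 < n → Efam m n = 0)
    (φ10 φ01 φ00 : MvPolynomial (Fin 2) ℂ ⊗[ℂ] E)
    (hφ10 : φ10 = ∑ᶠ m ∈ Set.Ici 1, ((X 0 : MvPolynomial (Fin 2) ℂ) ^ m) ⊗ₜ[ℂ] Efam m 0)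
    (hφ01 : φ01 = ∑ᶠ n ∈ Set.Ici 1, ((X 1 : MvPolynomial (Fin 2) ℂ) ^ n) ⊗ₜ[ℂ] Efam 0 n)
    (hφ00 : φ00 = (1 : MvPolynomial (Fin 2) ℂ) ⊗ₜ[ℂ] Efam 0 0)
    (V : MvPolynomial (Fin 2) ℂ ⊗[ℂ] E →ₗ[ℂ] MvPolynomial (Fin 2) ℂ ⊗[ℂ] E)
    (H00 : E)
    (ha : V φ00 = (1 : MvPolynomial (Fin 2) ℂ) ⊗ₜ[ℂ] H00)
    (hb : ∀ j k : ℕ, 1 ≤ k → Ecoeff E j k (V φ10) = 0)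
    (hc : ∀ j k : ℕ, 1 ≤ j → Ecoeff E j k (V φ01) = 0)
    (hd : NoMinusPhoton (V (φ10 + φ01 + φ00))) :
    ∃ F F0 G0 : E,
      V φ10 = (X 0 : MvPolynomial (Fin 2) ℂ) ⊗ₜ[ℂ] F
          + (1 : MvPolynomial (Fin 2) ℂ) ⊗ₜ[ℂ] F0
      ∧ V φ01 = (X 1 : MvPolynomial (Fin 2) ℂ) ⊗ₜ[ℂ] F
          + (1 : MvPolynomial (Fin 2) ℂ) ⊗ₜ[ℂ] G0
      ∧ V (φ01 + φ00) = (X 1 : MvPolynomial (Fin 2) ℂ) ⊗ₜ[ℂ] F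
          + (1 : MvPolynomial (Fin 2) ℂ) ⊗ₜ[ℂ] (G0 + H00)
      ∧ V (φ10 + φ00) = (X 0 : MvPolynomial (Fin 2) ℂ) ⊗ₜ[ℂ] F
          + (1 : MvPolynomial (Fin 2) ℂ) ⊗ₜ[ℂ] (F0 + H00) := by
  classical
  set ψ1 := V φ10 with hψ1
  set ψ2 := V φ01 with hψ2
  -- coefficient families
  set A : ℕ → E := fun n => MvPolynomial.scalarRTensor ψ1 (Finsupp.single 0 n) with hA
  set B : ℕ → E := fun n => MvPolynomial.scalarRTensor ψ2 (Finsupp.single 1 n) with hB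
  have h0_1 : ∀ m : Fin 2 →₀ ℕ, m 1 ≠ 0 → MvPolynomial.scalarRTensor ψ1 m = 0 := by
    intro m hm
    have h := hb (m 0) (m 1) (Nat.one_le_iff_ne_zero.mpr hm)
    rw [Ecoeff_eq] at h
    rw [fin2_decomp m]
    exact h
  have h0_2 : ∀ m : Fin 2 →₀ ℕ, m 0 ≠ 0 → MvPolynomial.scalarRTensor ψ2 m = 0 := by
    intro m hm
    have h := hc (m 0) (m 1) (Nat.one_le_iff_ne_zero.mpr hm)
    rw [Ecoeff_eq] at h
    rw [fin2_decomp m]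
    exact h
  have hsum : V (φ10 + φ01 + φ00) = ψ1 + ψ2 + (1 : MvPolynomial (Fin 2) ℂ) ⊗ₜ[ℂ] H00 := by
    rw [map_add, map_add, ha]
  have heq : ∀ d k : ℕ, 1 ≤ k →
      (rr ^ (d+k) * ((-1:ℂ) ^ k * ((d+k).choose k : ℂ))) • A (d+k)
        + (rr ^ (d+k) * ((d+k).choose k : ℂ)) • B (d+k) = 0 := by
    intro d k hk
    have h := hd d k hk
    rw [hsum, map_add, map_add, map_add, map_add] at h
    rw [key1 ψ1 h0_1 d k, key2 ψ2 h0_2 d k, key0 H00 d k hk, add_zero] at h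
    exact h
  -- k = 1 : B n = A n  for n ≥ 1
  have hAB : ∀ d : ℕ, B (d+1) = A (d+1) := by
    intro d
    have h := heq d 1 le_rfl
    set c : ℂ := rr ^ (d+1) * ((d+1).choose 1 : ℂ) with hcdef
    have hrw : rr ^ (d+1) * ((-1:ℂ) ^ 1 * ((d+1).choose 1 : ℂ)) = -c := by
      rw [hcdef]; ring
    rw [hrw, neg_smul] at h
    have hc0 : c ≠ 0 := by
      apply mul_ne_zero (pow_ne_zero _ rr_ne)
      rw [Nat.choose_one_right]
      exact_mod_cast Nat.succ_ne_zero d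
    have hsub : c • (B (d+1) - A (d+1)) = 0 := by
      rw [smul_sub, ← h]
      abel
    have := (smul_eq_zero.mp hsub).resolve_left hc0
    exact sub_eq_zero.mp this
  -- k = 2 : A n = 0 and B n = 0 for n ≥ 2
  have hA0 : ∀ d : ℕ, A (d+2) = 0 := by
    intro d
    have h := heq d 2 (by norm_num)
    have hrw : rr ^ (d+2) * ((-1:ℂ) ^ 2 * ((d+2).choose 2 : ℂ))
        = rr ^ (d+2) * ((d+2).choose 2 : ℂ) := by ring
    rw [hrw] at h
    have hBA : B (d+2) = A (d+2) := hAB (d+1)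
    rw [hBA, ← smul_add] at h
    have hc0 : (rr ^ (d+2) * ((d+2).choose 2 : ℂ)) ≠ 0 := by
      apply mul_ne_zero (pow_ne_zero _ rr_ne)
      have : 0 < (d+2).choose 2 := Nat.choose_pos (by omega)
      exact_mod_cast this.ne'
    have h2 := (smul_eq_zero.mp h).resolve_left hc0
    have h3 : (2:ℂ) • A (d+2) = 0 := by
      rw [show ((2:ℂ)) = ((1:ℂ) + 1) by norm_num, add_smul, one_smul]
      exact h2
    have := (smul_eq_zero.mp h3).resolve_left (by norm_num)
    exact this
  have hB0 : ∀ d : ℕ, B (d+2) = 0 := fun d => (hAB (d+1)).trans (hA0 d)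
  -- reconstruction
  have hrec1 : ψ1 = (X 0 : MvPolynomial (Fin 2) ℂ) ⊗ₜ[ℂ] Ecoeff E 1 0 ψ1
      + (1 : MvPolynomial (Fin 2) ℂ) ⊗ₜ[ℂ] Ecoeff E 0 0 ψ1 := by
    apply reconstruct0 ψ1 hb
    intro j hj
    obtain ⟨d, rfl⟩ : ∃ d, j = d + 2 := ⟨j - 2, by omega⟩
    rw [Ecoeff_eq]
    have : (Finsupp.single (0 : Fin 2) (d+2) + Finsupp.single 1 0)
        = Finsupp.single 0 (d+2) := by simp
    rw [this]
    exact hA0 d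
  have hrec2 : ψ2 = (X 1 : MvPolynomial (Fin 2) ℂ) ⊗ₜ[ℂ] Ecoeff E 0 1 ψ2
      + (1 : MvPolynomial (Fin 2) ℂ) ⊗ₜ[ℂ] Ecoeff E 0 0 ψ2 := by
    apply reconstruct1 ψ2 hc
    intro k hk
    obtain ⟨d, rfl⟩ : ∃ d, k = d + 2 := ⟨k - 2, by omega⟩
    rw [Ecoeff_eq]
    have : (Finsupp.single (0 : Fin 2) 0 + Finsupp.single 1 (d+2))
        = Finsupp.single 1 (d+2) := by simp
    rw [this]
    exact hB0 d
  -- identify the two single-photon Eve vectors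
  have hF : Ecoeff E 0 1 ψ2 = Ecoeff E 1 0 ψ1 := by
    rw [Ecoeff_eq, Ecoeff_eq]
    have e1 : (Finsupp.single (0 : Fin 2) 0 + Finsupp.single 1 1)
        = Finsupp.single 1 1 := by simp
    have e2 : (Finsupp.single (0 : Fin 2) 1 + Finsupp.single 1 0)
        = Finsupp.single 0 1 := by simp
    rw [e1, e2]
    exact hAB 0
  have hrec2' : V φ01 = (X 1 : MvPolynomial (Fin 2) ℂ) ⊗ₜ[ℂ] Ecoeff E 1 0 ψ1
      + (1 : MvPolynomial (Fin 2) ℂ) ⊗ₜ[ℂ] Ecoeff E 0 0 ψ2 := by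
    rw [← hF]; exact hrec2
  have hrec1' : V φ10 = (X 0 : MvPolynomial (Fin 2) ℂ) ⊗ₜ[ℂ] Ecoeff E 1 0 ψ1
      + (1 : MvPolynomial (Fin 2) ℂ) ⊗ₜ[ℂ] Ecoeff E 0 0 ψ1 := hrec1
  refine ⟨Ecoeff E 1 0 ψ1, Ecoeff E 0 0 ψ1, Ecoeff E 0 0 ψ2, hrec1, hrec2', ?_, ?_⟩
  · conv_lhs => rw [map_add, ha, hrec2', add_assoc, ← TensorProduct.tmul_add]
  · conv_lhs => rw [map_add, ha, hrec1', add_assoc, ← TensorProduct.tmul_add]
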